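/- Let H₀ ∈ ℝ and let f : ℝ → ℝ be twice differentiable on (0,∞). Then (1/2)(f'(u)/u + f''(u)) = H₀ for all u > 0 if and only if there exist constants c₁, c₂ ∈ ℝ such that f(u) = (H₀/2)u² + c₁ ln u + c₂ for all u > 0. -/

import Mathlib

/-- A function with zero derivative on `(0,∞)` is constant there. -/
lemma const_of_deriv_zero_Ioi (g : ℝ → ℝ)
    (hg : ∀ x ∈ Set.Ioi (0 : ℝ), DifferentiableAt ℝ g x)
    (hg' : ∀ x ∈ Set.Ioi (0 : ℝ), deriv g x = 0) :
    ∀ x ∈ Set.Ioi (0 : ℝ), ∀ y ∈ Set.Ioi (0 : ℝ), g x = g y := by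
  intro x hx y hy
  refine (convex_Ioi (0:ℝ)).is_const_of_fderivWithin_eq_zero
    (fun z hz => (hg z hz).differentiableWithinAt) (fun z hz => ?_) hx hy
  rw [fderivWithin_of_isOpen isOpen_Ioi hz, ← toSpanSingleton_deriv, hg' z hz]
  ext; simp

/-- Classification of surfaces of revolution in the semi-isotropic space with constant
semi-isotropic mean curvature `H₀`: for `f` twice differentiable on `(0,∞)`,
`(1/2)(f'(u)/u + f''(u)) = H₀` for all `u > 0` iff
`f(u) = (H₀/2)u² + c₁ ln u + c₂` on `(0,∞)` for some constants `c₁, c₂`. -/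
theorem surface_of_revolution_constant_H
    (H₀ : ℝ) (f : ℝ → ℝ)
    (hf : ∀ u ∈ Set.Ioi (0 : ℝ), DifferentiableAt ℝ f u)
    (hf' : ∀ u ∈ Set.Ioi (0 : ℝ), DifferentiableAt ℝ (deriv f) u) :
    (∀ u ∈ Set.Ioi (0 : ℝ), (1 / 2) * (deriv f u / u + deriv (deriv f) u) = H₀) ↔
    (∃ c₁ c₂ : ℝ, ∀ u ∈ Set.Ioi (0 : ℝ),
      f u = H₀ / 2 * u ^ 2 + c₁ * Real.log u + c₂) := by
  constructor
  · intro heq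
    -- g z := z * f'(z) - H₀ z² is constant on (0,∞)
    set g : ℝ → ℝ := fun z => z * deriv f z - H₀ * z ^ 2 with hgdef
    have hgd : ∀ z ∈ Set.Ioi (0:ℝ), HasDerivAt g
        (1 * deriv f z + z * deriv (deriv f) z - H₀ * (2 * z ^ 1)) z := by
      intro z hz
      exact ((hasDerivAt_id z).mul (hf' z hz).hasDerivAt).sub
        ((hasDerivAt_pow 2 z).const_mul H₀)
    have hg0 : ∀ z ∈ Set.Ioi (0:ℝ), deriv g z = 0 := by
      intro z hz
      have hzne : z ≠ 0 := ne_of_gt hz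
      have h1 := heq z hz
      have h2 : deriv f z + z * deriv (deriv f) z - 2 * H₀ * z = 0 := by
        field_simp at h1
        nlinarith [h1]
      rw [(hgd z hz).deriv]
      ring_nf
      ring_nf at h2
      linarith
    have hgconst := const_of_deriv_zero_Ioi g
      (fun z hz => (hgd z hz).differentiableAt) hg0
    set c₁ : ℝ := g 1 with hc1
    have hderiv : ∀ z ∈ Set.Ioi (0:ℝ), deriv f z = H₀ * z + c₁ / z := by
      intro z hz
      have hzne : z ≠ 0 := ne_of_gt hz
      have := hgconst z hz 1 (by norm_num)
      rw [← hc1] at this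
      simp only [hgdef] at this
      field_simp at this ⊢
      linarith
    -- h z := f z - (H₀/2 z² + c₁ log z) is constant
    set h : ℝ → ℝ := fun z => f z - (H₀ / 2 * z ^ 2 + c₁ * Real.log z) with hhdef
    have hhd : ∀ z ∈ Set.Ioi (0:ℝ), HasDerivAt h
        (deriv f z - (H₀ / 2 * (2 * z ^ 1) + c₁ * z⁻¹)) z := by
      intro z hz
      exact (hf z hz).hasDerivAt.sub (((hasDerivAt_pow 2 z).const_mul (H₀/2)).add
        ((Real.hasDerivAt_log (ne_of_gt hz)).const_mul c₁))
    have hh0 : ∀ z ∈ Set.Ioi (0:ℝ), deriv h z = 0 := by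
      intro z hz
      have hzne : z ≠ 0 := ne_of_gt hz
      rw [(hhd z hz).deriv, hderiv z hz]
      field_simp
      ring
    have hhconst := const_of_deriv_zero_Ioi h
      (fun z hz => (hhd z hz).differentiableAt) hh0
    refine ⟨c₁, h 1, fun u hu => ?_⟩
    have := hhconst u hu 1 (by norm_num)
    simp only [hhdef, Real.log_one] at this ⊢
    linarith
  · rintro ⟨c₁, c₂, hF⟩ u hu
    have hune : u ≠ 0 := ne_of_gt hu
    set F : ℝ → ℝ := fun z => H₀ / 2 * z ^ 2 + c₁ * Real.log z + c₂ with hFdef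
    have hmem : Set.Ioi (0:ℝ) ∈ nhds u := isOpen_Ioi.mem_nhds hu
    have hev : f =ᶠ[nhds u] F :=
      Filter.eventuallyEq_of_mem hmem (fun z hz => hF z hz)
    -- derivative of F at any z > 0
    have hFd : ∀ z : ℝ, z ≠ 0 → HasDerivAt F (H₀ * z + c₁ * z⁻¹) z := by
      intro z hz
      have : HasDerivAt F (H₀ / 2 * (2 * z ^ 1) + c₁ * z⁻¹ + 0) z :=
        ((((hasDerivAt_pow 2 z).const_mul (H₀/2)).add
          ((Real.hasDerivAt_log hz).const_mul c₁)).add (hasDerivAt_const z c₂))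
      convert this using 1
      ring
    have hd1 : deriv f u = H₀ * u + c₁ * u⁻¹ := by
      rw [hev.deriv_eq, (hFd u hune).deriv]
    have hev' : deriv f =ᶠ[nhds u] fun z => H₀ * z + c₁ * z⁻¹ := by
      have h1 : deriv f =ᶠ[nhds u] deriv F := hev.deriv
      refine h1.trans (Filter.eventuallyEq_of_mem hmem (fun z hz => ?_))
      exact (hFd z (ne_of_gt hz)).deriv
    have hd2 : deriv (deriv f) u = H₀ + c₁ * (-(u ^ 2)⁻¹) := by
      rw [hev'.deriv_eq]
      have : HasDerivAt (fun z : ℝ => H₀ * z + c₁ * z⁻¹)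
          (H₀ * 1 + c₁ * (-(u ^ 2)⁻¹)) u :=
        ((hasDerivAt_id u).const_mul H₀).add ((hasDerivAt_inv hune).const_mul c₁)
      rw [this.deriv]; ring
    rw [hd1, hd2]
    field_simp
    ring
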